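/- For any numerical set S (S ≠ ℕ), B(S) ∈ A(S) if and only if S ∩ [1, F(S) − B(S)] = ∅. -/
import Mathlib


open Set

def IsNumericalSet (S : Set ℕ) : Prop := 0 ∈ S ∧ Sᶜ.Finite

def IsNumericalSemigroup (S : Set ℕ) : Prop :=
  IsNumericalSet S ∧ ∀ a ∈ S, ∀ b ∈ S, a + b ∈ S

/-- The associated set `A(S) = {s ∈ S : s + S ⊆ S}`. -/
def A (S : Set ℕ) : Set ℕ := {s ∈ S | ∀ t ∈ S, s + t ∈ S}

/-- The Frobenius number: the largest gap of `S`. -/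
noncomputable def F (S : Set ℕ) : ℕ := sSup Sᶜ

/-- The base: the largest element of `S` below `F S`. -/
noncomputable def B (S : Set ℕ) : ℕ := sSup {s | s ∈ S ∧ s < F S}

/-- The multiplicity: the smallest positive element of `S`. -/
noncomputable def m (S : Set ℕ) : ℕ := sInf {s | s ∈ S ∧ 0 < s}

/-- The complement numerical set (for `S ≠ ℕ`). -/
noncomputable def Stilde (S : Set ℕ) : Set ℕ :=
  {x | ∃ s ∈ S, s ≤ B S ∧ x = B S - s} ∪ {n | B S ≤ n}

-- The complement operation, with the convention that the complement of ℕ is ℕ.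
open Classical in
noncomputable def complOp (S : Set ℕ) : Set ℕ :=
  if S = Set.univ then Set.univ else Stilde S

/-- The genus: the number of gaps. -/
noncomputable def genus (S : Set ℕ) : ℕ := Sᶜ.ncard

/-- The number of boxes with hook length 1. -/
noncomputable def c1 (S : Set ℕ) : ℕ := {n | n ∈ S ∧ n + 1 ∉ S}.ncard

/-- An atom: a positive element not a sum of two positive elements. -/
def IsAtomOf (S : Set ℕ) (a : ℕ) : Prop :=
  a ∈ S ∧ 0 < a ∧ ¬ ∃ x ∈ S, ∃ y ∈ S, 0 < x ∧ 0 < y ∧ a = x + y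

/-- A small atom: an atom smaller than the Frobenius number. -/
def IsSmallAtom (S : Set ℕ) (a : ℕ) : Prop := IsAtomOf S a ∧ a < F S

/-- The embedding dimension: the number of atoms. -/
noncomputable def numAtoms (S : Set ℕ) : ℕ := {a | IsAtomOf S a}.ncard

/-- Maximal embedding dimension. -/
def MaxED (S : Set ℕ) : Prop := numAtoms S = m S


theorem base_mem_associated_iff (S : Set ℕ) (hS : IsNumericalSet S) (hne : S ≠ Set.univ) :
    B S ∈ A S ↔ S ∩ Set.Icc 1 (F S - B S) = ∅ := by
  obtain ⟨h0, hfin⟩ := hS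
  have hcne : Sᶜ.Nonempty := by rw [Set.nonempty_compl]; exact hne
  have hbdd : BddAbove Sᶜ := hfin.bddAbove
  have hF : F S ∈ Sᶜ := Nat.sSup_mem hcne hbdd
  have hFle : ∀ n ∉ S, n ≤ F S := fun n hn => le_csSup hbdd hn
  have hgt : ∀ n, F S < n → n ∈ S := by
    intro n hn
    by_contra h
    exact absurd (hFle n h) (not_le.mpr hn)
  have hFpos : 0 < F S := Nat.pos_of_ne_zero (fun h => hF (h ▸ h0))
  have hTne : (0:ℕ) ∈ {s | s ∈ S ∧ s < F S} := ⟨h0, hFpos⟩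
  have hTbdd : BddAbove {s | s ∈ S ∧ s < F S} := ⟨F S, fun x hx => hx.2.le⟩
  have hB : B S ∈ {s | s ∈ S ∧ s < F S} := Nat.sSup_mem ⟨0, hTne⟩ hTbdd
  obtain ⟨hBS, hBF⟩ := hB
  constructor
  · intro hA
    ext x
    simp only [Set.mem_inter_iff, Set.mem_Icc, Set.mem_empty_iff_false, iff_false]
    rintro ⟨hxS, hx1, hx2⟩
    have hsum : B S + x ∈ S := hA.2 x hxS
    have hle : B S + x ≤ F S := by omega
    have hlt : B S + x < F S := lt_of_le_of_ne hle (fun h => hF (h ▸ hsum))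
    have : B S + x ≤ B S := le_csSup hTbdd ⟨hsum, hlt⟩
    omega
  · intro hemp
    refine ⟨hBS, fun t ht => ?_⟩
    rcases Nat.eq_zero_or_pos t with rfl | htpos
    · simpa using hBS
    · have hni : t ∉ Set.Icc 1 (F S - B S) := by
        intro hm
        exact absurd (Set.mem_inter ht hm) (by rw [hemp]; simp)
      simp only [Set.mem_Icc, not_and, not_le] at hni
      have := hni htpos
      exact hgt _ (by omega)
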